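/- Fix α > 0 and n > 0. Let q: [0,1] → ℝ be absolutely continuous with q(0) = 0, ∫₀¹ q′(x)² dx ≤ n, and ∫₀¹ (1−x)^α q(x)² dx ≤ 1. Then sup_{x∈[0,1]} |q(x)| ≤ c_α n^{(1+α)/(2(2+α))} for a constant c_α depending only on α, and for every ε ∈ (0,1), sup_{x∈[0,1−ε]} |q(x)| ≤ c_{α,ε} n^{1/4} for a constant c_{α,ε} depending only on (α, ε). -/

import Mathlib

open MeasureTheory intervalIntegral


lemma aux_cont (q g : ℝ → ℝ) (hg : IntervalIntegrable g volume 0 1)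
    (hq : ∀ x ∈ Set.Icc (0:ℝ) 1, q x = ∫ t in (0:ℝ)..x, g t) :
    ContinuousOn q (Set.Icc 0 1) := by
  have h : Set.uIcc (0:ℝ) 1 = Set.Icc 0 1 := Set.uIcc_of_le zero_le_one
  have hint : IntegrableOn g (Set.uIcc (0:ℝ) 1) volume := by
    rw [h, integrableOn_Icc_iff_integrableOn_Ioc]
    exact hg.1
  have h2 := intervalIntegral.continuousOn_primitive_interval (a := 0) (b := 1) hint
  rw [h] at h2
  exact h2.congr hq

lemma holder_step (n : ℝ) (hn : 0 < n) (q g : ℝ → ℝ)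
    (hg : IntervalIntegrable g volume 0 1)
    (hg2 : IntervalIntegrable (fun t => g t ^ 2) volume 0 1)
    (hq : ∀ x ∈ Set.Icc (0:ℝ) 1, q x = ∫ t in (0:ℝ)..x, g t)
    (hgn : (∫ t in (0:ℝ)..1, g t ^ 2) ≤ n)
    {x y : ℝ} (hx : x ∈ Set.Icc (0:ℝ) 1) (hy : y ∈ Set.Icc (0:ℝ) 1) (hxy : x ≤ y) :
    |q y - q x| ≤ Real.sqrt (n * (y - x)) := by
  rcases eq_or_lt_of_le hxy with h | h
  · subst h; simp [Real.sqrt_nonneg]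
  · have h01 : Set.uIcc (0:ℝ) 1 = Set.Icc 0 1 := Set.uIcc_of_le zero_le_one
    have hmemx : x ∈ Set.uIcc (0:ℝ) 1 := by rw [h01]; exact hx
    have hmemy : y ∈ Set.uIcc (0:ℝ) 1 := by rw [h01]; exact hy
    have hmem0 : (0:ℝ) ∈ Set.uIcc (0:ℝ) 1 := by rw [h01]; constructor <;> norm_num
    have hsub : Set.uIcc x y ⊆ Set.uIcc (0:ℝ) 1 := Set.uIcc_subset_uIcc hmemx hmemy
    have hsub0 : Set.uIcc (0:ℝ) x ⊆ Set.uIcc (0:ℝ) 1 := Set.uIcc_subset_uIcc hmem0 hmemx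
    have hgxy := hg.mono_set hsub
    have hg2xy := hg2.mono_set hsub
    have hqdiff : q y - q x = ∫ t in x..y, g t := by
      rw [hq x hx, hq y hy]
      have h3 := integral_add_adjacent_intervals (hg.mono_set hsub0) hgxy
      linarith
    set L := Real.sqrt (n / (y - x)) with hLdef
    have hL : 0 < L := Real.sqrt_pos.2 (div_pos hn (by linarith))
    have hpt : ∀ t ∈ Set.Icc x y, 2 * L * |g t| ≤ L ^ 2 + g t ^ 2 := by
      intro t _
      nlinarith [sq_nonneg (|g t| - L), sq_abs (g t)]
    have hmono : ∫ t in x..y, 2 * L * |g t| ≤ ∫ t in x..y, (L ^ 2 + g t ^ 2) :=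
      integral_mono_on h.le ((hgxy.abs).const_mul _)
        (intervalIntegrable_const.add hg2xy) hpt
    rw [intervalIntegral.integral_const_mul] at hmono
    rw [integral_add intervalIntegrable_const hg2xy, intervalIntegral.integral_const, smul_eq_mul] at hmono
    have hI : (∫ t in x..y, g t ^ 2) ≤ n := by
      refine le_trans (integral_mono_interval hx.1 hxy hy.2 ?_ hg2) hgn
      filter_upwards with t
      positivity
    have hL2 : L ^ 2 * (y - x) = n := by
      rw [hLdef, Real.sq_sqrt (le_of_lt (div_pos hn (by linarith)))]
      exact div_mul_cancel₀ n (by intro hc; nlinarith)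
    have habs : |∫ t in x..y, g t| ≤ ∫ t in x..y, |g t| :=
      intervalIntegral.abs_integral_le_integral_abs h.le
    have hfin : (∫ t in x..y, |g t|) ≤ n / L := by
      rw [le_div_iff₀ hL]
      nlinarith
    have hnl : n / L = Real.sqrt (n * (y - x)) := by
      rw [hLdef, Real.sqrt_div hn.le, div_div_eq_mul_div, mul_div_right_comm,
        Real.div_sqrt, ← Real.sqrt_mul hn.le]
    rw [hqdiff]
    calc |∫ t in x..y, g t| ≤ ∫ t in x..y, |g t| := habs
      _ ≤ n / L := hfin
      _ = _ := hnl


lemma cont_weight (α : ℝ) (hα : 0 < α) :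
    ContinuousOn (fun x : ℝ => (1 - x) ^ α) (Set.Icc 0 1) := by
  intro x _
  have h1 : ContinuousAt (fun y : ℝ => y ^ α) (1 - x) :=
    Real.continuousAt_rpow_const _ _ (Or.inr hα.le)
  exact (h1.comp ((continuous_const.sub continuous_id).continuousAt)).continuousWithinAt

lemma good_point (α : ℝ) (hα : 0 < α) (q : ℝ → ℝ)
    (hc : ContinuousOn q (Set.Icc 0 1))
    (hint : (∫ x in (0:ℝ)..1, (1 - x) ^ α * q x ^ 2) ≤ 1)
    {a b d : ℝ} (ha : 0 ≤ a) (hab : a < b) (hbd : b ≤ 1 - d) (hd : 0 < d) :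
    ∃ y ∈ Set.Icc a b, q y ^ 2 ≤ 1 / ((b - a) * d ^ α) := by
  have hb1 : b ≤ 1 := by linarith
  have hsub : Set.Icc a b ⊆ Set.Icc (0:ℝ) 1 := Set.Icc_subset_Icc ha hb1
  have h01 : Set.uIcc (0:ℝ) 1 = Set.Icc 0 1 := Set.uIcc_of_le zero_le_one
  have hab' : Set.uIcc a b = Set.Icc a b := Set.uIcc_of_le hab.le
  have hwcont : ContinuousOn (fun x : ℝ => (1 - x) ^ α * q x ^ 2) (Set.Icc 0 1) :=
    (cont_weight α hα).mul (hc.pow 2)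
  have hwint : IntervalIntegrable (fun x : ℝ => (1 - x) ^ α * q x ^ 2) volume 0 1 := by
    apply ContinuousOn.intervalIntegrable; rw [h01]; exact hwcont
  have hq2int : IntervalIntegrable (fun x => q x ^ 2) volume a b := by
    apply ContinuousOn.intervalIntegrable; rw [hab']; exact (hc.mono hsub).pow 2
  have key : ∀ x ∈ Set.Icc a b, d ^ α * q x ^ 2 ≤ (1 - x) ^ α * q x ^ 2 := by
    intro x hx
    have h1 : d ≤ 1 - x := by linarith [hx.2]
    have h2 := Real.rpow_le_rpow hd.le h1 hα.le
    nlinarith [sq_nonneg (q x)]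
  have h2 : d ^ α * ∫ x in a..b, q x ^ 2 ≤ 1 := by
    have hm : ∫ x in a..b, d ^ α * q x ^ 2 ≤ ∫ x in a..b, (1 - x) ^ α * q x ^ 2 :=
      integral_mono_on hab.le (hq2int.const_mul _)
        (hwint.mono_set (by rw [hab', h01]; exact hsub)) key
    have hm2 : (∫ x in a..b, (1 - x) ^ α * q x ^ 2) ≤ 1 := by
      refine le_trans (integral_mono_interval ha hab.le hb1 ?_ hwint) hint
      filter_upwards [ae_restrict_mem measurableSet_Ioc] with t ht
      have hnn : (0:ℝ) ≤ (1 - t) ^ α := Real.rpow_nonneg (by linarith [ht.2]) α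
      exact mul_nonneg hnn (sq_nonneg _)
    rw [intervalIntegral.integral_const_mul] at hm
    linarith
  obtain ⟨y, hy, hmin⟩ := (isCompact_Icc).exists_isMinOn ⟨a, le_refl a, hab.le⟩
    ((hc.mono hsub).pow 2)
  refine ⟨y, hy, ?_⟩
  have h3 : (b - a) * q y ^ 2 ≤ ∫ x in a..b, q x ^ 2 := by
    have h4 : ∫ _x in a..b, q y ^ 2 ≤ ∫ x in a..b, q x ^ 2 :=
      integral_mono_on hab.le intervalIntegrable_const hq2int (fun x hx => hmin hx)
    rwa [intervalIntegral.integral_const, smul_eq_mul] at h4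
  have hdα : 0 < d ^ α := Real.rpow_pos_of_pos hd α
  rw [le_div_iff₀ (mul_pos (by linarith) hdα)]
  calc q y ^ 2 * ((b - a) * d ^ α) = d ^ α * ((b - a) * q y ^ 2) := by ring
    _ ≤ d ^ α * ∫ x in a..b, q x ^ 2 := mul_le_mul_of_nonneg_left h3 hdα.le
    _ ≤ 1 := h2

lemma core_bound (α : ℝ) (hα : 0 < α) (n : ℝ) (hn : 0 < n) (q g : ℝ → ℝ)
    (hg : IntervalIntegrable g volume 0 1)
    (hg2 : IntervalIntegrable (fun t => g t ^ 2) volume 0 1)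
    (hq : ∀ x ∈ Set.Icc (0:ℝ) 1, q x = ∫ t in (0:ℝ)..x, g t)
    (hgn : (∫ t in (0:ℝ)..1, g t ^ 2) ≤ n)
    (hint : (∫ x in (0:ℝ)..1, (1 - x) ^ α * q x ^ 2) ≤ 1)
    {δ d x : ℝ} (hδ : 0 < δ) (hd : 0 < d) (hδd : δ + d ≤ 1)
    (hx : x ∈ Set.Icc (0:ℝ) (1 - d)) :
    |q x| ≤ Real.sqrt (1 / (δ * d ^ α)) + Real.sqrt (n * δ) := by
  have hc := aux_cont q g hg hq
  set a := min x (1 - d - δ) with ha_def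
  have ha0 : 0 ≤ a := le_min hx.1 (by linarith)
  have hab : a < a + δ := by linarith
  have hbd : a + δ ≤ 1 - d := by
    have h1 : a ≤ 1 - d - δ := min_le_right _ _
    linarith
  obtain ⟨y, hy, hqy⟩ := good_point α hα q hc hint ha0 hab hbd hd
  have hxa : a ≤ x := min_le_left _ _
  have hxb : x ≤ a + δ := by
    rcases le_total x (1 - d - δ) with h | h
    · have h2 : a = x := min_eq_left h
      linarith
    · have h2 : a = 1 - d - δ := min_eq_right h
      linarith [hx.2]
  have hx01 : x ∈ Set.Icc (0:ℝ) 1 := ⟨hx.1, by linarith [hx.2]⟩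
  have hy01 : y ∈ Set.Icc (0:ℝ) 1 := ⟨le_trans ha0 hy.1, by linarith [hy.2]⟩
  have hdiff : |q x - q y| ≤ Real.sqrt (n * δ) := by
    rcases le_total x y with h | h
    · have h3 := holder_step n hn q g hg hg2 hq hgn hx01 hy01 h
      rw [abs_sub_comm]
      refine h3.trans (Real.sqrt_le_sqrt ?_)
      nlinarith [hy.2, hxa]
    · have h3 := holder_step n hn q g hg hg2 hq hgn hy01 hx01 h
      refine h3.trans (Real.sqrt_le_sqrt ?_)
      nlinarith [hy.1, hxb]
  have hqy' : |q y| ≤ Real.sqrt (1 / (δ * d ^ α)) := by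
    rw [← Real.sqrt_sq_eq_abs]
    apply Real.sqrt_le_sqrt
    have h4 : a + δ - a = δ := by ring
    rwa [h4] at hqy
  calc |q x| = |q y + (q x - q y)| := by ring_nf
    _ ≤ |q y| + |q x - q y| := abs_add_le _ _
    _ ≤ _ := add_le_add hqy' hdiff

lemma sqrt_mul_rpow (n c s : ℝ) (hn : 0 < n) (hc : 0 < c) :
    Real.sqrt (c * n ^ s) = c ^ ((1:ℝ)/2) * n ^ (s / 2) := by
  rw [Real.sqrt_eq_rpow, Real.mul_rpow hc.le (Real.rpow_pos_of_pos hn s).le,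
    ← Real.rpow_mul hn.le, show s * (1/2) = s/2 by ring]

set_option maxHeartbeats 1000000 in
/-- sup-norm bounds for functions with bounded Sobolev energy and
bounded weighted L²-norm
(Lemma lemma:perturb-func-bound-under-cons-for-missing-data-example).
Absolute continuity of `q` with `q 0 = 0` and square-integrable derivative is
encoded by `q x = ∫ t in 0..x, g t` with `g` square-integrable. -/
theorem statement19 (α : ℝ) (hα : 0 < α) :
    (∃ cα : ℝ, 0 < cα ∧
      ∀ (n : ℝ), 0 < n → ∀ q g : ℝ → ℝ,
        IntervalIntegrable g volume 0 1 →
        IntervalIntegrable (fun t => g t ^ 2) volume 0 1 →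
        (∀ x ∈ Set.Icc (0 : ℝ) 1, q x = ∫ t in (0 : ℝ)..x, g t) →
        (∫ t in (0 : ℝ)..1, g t ^ 2) ≤ n →
        (∫ x in (0 : ℝ)..1, (1 - x) ^ α * q x ^ 2) ≤ 1 →
        ∀ x ∈ Set.Icc (0 : ℝ) 1,
          |q x| ≤ cα * n ^ ((1 + α) / (2 * (2 + α)))) ∧
    (∀ ε : ℝ, ε ∈ Set.Ioo (0 : ℝ) 1 →
      ∃ cαε : ℝ, 0 < cαε ∧
        ∀ (n : ℝ), 0 < n → ∀ q g : ℝ → ℝ,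
          IntervalIntegrable g volume 0 1 →
          IntervalIntegrable (fun t => g t ^ 2) volume 0 1 →
          (∀ x ∈ Set.Icc (0 : ℝ) 1, q x = ∫ t in (0 : ℝ)..x, g t) →
          (∫ t in (0 : ℝ)..1, g t ^ 2) ≤ n →
          (∫ x in (0 : ℝ)..1, (1 - x) ^ α * q x ^ 2) ≤ 1 →
          ∀ x ∈ Set.Icc (0 : ℝ) (1 - ε),
            |q x| ≤ cαε * n ^ ((1 : ℝ) / 4)) := by
  have h2α : (0:ℝ) < 2 + α := by linarith
  constructor
  · -- Part 1
    refine ⟨(4:ℝ) ^ ((1 + α) / 2) + 1, by positivity, ?_⟩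
    intro n hn q g hg hg2 hq hgn hint x hx
    set e := (1 + α) / (2 * (2 + α)) with he_def
    have hC0 : (0:ℝ) < (4:ℝ) ^ ((1 + α) / 2) := Real.rpow_pos_of_pos (by norm_num) _
    rcases le_total n 1 with hn1 | hn1
    · -- small n
      have h0 : (0:ℝ) ∈ Set.Icc (0:ℝ) 1 := by constructor <;> norm_num
      have hq0 : q 0 = 0 := by rw [hq 0 h0]; simp
      have h1 := holder_step n hn q g hg hg2 hq hgn h0 hx hx.1
      rw [hq0, sub_zero] at h1
      have h2 : Real.sqrt (n * (x - 0)) ≤ Real.sqrt n := by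
        apply Real.sqrt_le_sqrt; nlinarith [hx.2, hx.1]
      have h3 : Real.sqrt n = n ^ ((1:ℝ)/2) := Real.sqrt_eq_rpow n
      have h4 : n ^ ((1:ℝ)/2) ≤ n ^ e := by
        apply Real.rpow_le_rpow_of_exponent_ge hn hn1
        rw [he_def, div_le_div_iff₀ (by positivity) (by norm_num)]
        nlinarith
      have h5 : n ^ e ≤ ((4:ℝ) ^ ((1 + α) / 2) + 1) * n ^ e := by
        have hne : (0:ℝ) < n ^ e := Real.rpow_pos_of_pos hn e
        nlinarith
      linarith
    · -- large n
      set t := -(2 + α)⁻¹ with ht_def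
      set δ := (4:ℝ)⁻¹ * n ^ t with hδdef
      have hnt : 0 < n ^ t := Real.rpow_pos_of_pos hn t
      have hnt1 : n ^ t ≤ 1 := Real.rpow_le_one_of_one_le_of_nonpos hn1
        (by rw [ht_def]; simp; positivity)
      have hδpos : 0 < δ := by rw [hδdef]; positivity
      have hδ14 : δ ≤ 4⁻¹ := by rw [hδdef]; nlinarith
      have hδd : δ + δ ≤ 1 := by linarith
      set x' := min x (1 - δ) with hx'def
      have hx' : x' ∈ Set.Icc (0:ℝ) (1 - δ) := ⟨le_min hx.1 (by linarith), min_le_right _ _⟩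
      have h1 := core_bound α hα n hn q g hg hg2 hq hgn hint hδpos hδpos hδd hx'
      have hx'01 : x' ∈ Set.Icc (0:ℝ) 1 := ⟨hx'.1, by linarith [hx'.2]⟩
      have h2 := holder_step n hn q g hg hg2 hq hgn hx'01 hx (min_le_left _ _)
      have h2' : Real.sqrt (n * (x - x')) ≤ Real.sqrt (n * δ) := by
        apply Real.sqrt_le_sqrt
        have : 1 - δ ≤ x' ∨ x' = x := by
          rcases le_total x (1 - δ) with h | h
          · right; rw [hx'def]; exact min_eq_left h
          · left; rw [hx'def, min_eq_right h]
        rcases this with h | h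
        · nlinarith [hx.2]
        · rw [h]; nlinarith
      -- computations
      have e1 : δ * δ ^ α = δ ^ ((1:ℝ) + α) := by
        rw [Real.rpow_add hδpos, Real.rpow_one]
      have e2 : δ ^ ((1:ℝ) + α) = (4:ℝ)⁻¹ ^ ((1:ℝ) + α) * n ^ (t * (1 + α)) := by
        rw [hδdef, Real.mul_rpow (by norm_num) hnt.le, ← Real.rpow_mul hn.le]
      have e3 : 1 / (δ * δ ^ α) = (4:ℝ) ^ ((1:ℝ) + α) * n ^ (-(t * (1 + α))) := by
        rw [e1, e2, Real.inv_rpow (by norm_num : (0:ℝ) ≤ 4), one_div, mul_inv, inv_inv,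
          ← Real.rpow_neg hn.le]
      have hA : Real.sqrt (1 / (δ * δ ^ α)) = (4:ℝ) ^ ((1 + α) / 2) * n ^ e := by
        rw [e3, sqrt_mul_rpow _ _ _ hn (Real.rpow_pos_of_pos (by norm_num) _),
          ← Real.rpow_mul (by norm_num : (0:ℝ) ≤ 4),
          show ((1:ℝ) + α) * (1/2) = (1 + α) / 2 by ring,
          show -(t * (1 + α)) / 2 = e by
            rw [ht_def, he_def]; rw [div_eq_div_iff (by norm_num) (by positivity)]; field_simp]
      have hB : Real.sqrt (n * δ) = 2⁻¹ * n ^ e := by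
        have hν : n * δ = (4:ℝ)⁻¹ * n ^ (1 + t) := by
          rw [hδdef, Real.rpow_add hn, Real.rpow_one]; ring
        rw [hν, sqrt_mul_rpow _ _ _ hn (by norm_num),
          show ((4:ℝ)⁻¹) ^ ((1:ℝ)/2) = 2⁻¹ by
            rw [← Real.sqrt_eq_rpow, show (4:ℝ)⁻¹ = (2⁻¹)^2 by norm_num,
              Real.sqrt_sq (by norm_num)],
          show (1 + t) / 2 = e by rw [ht_def, he_def]; field_simp; ring]
      have habs : |q x| ≤ |q x'| + |q x - q x'| := by
        have h7 := abs_add_le (q x') (q x - q x')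
        simpa using h7
      rw [hA, hB] at h1
      rw [hB] at h2'
      have hge := le_trans h2 h2'
      nlinarith [Real.rpow_pos_of_pos hn e]
  · -- Part 2
    intro ε hε
    obtain ⟨hε0, hε1⟩ := hε
    have hεα : 0 < ε ^ α := Real.rpow_pos_of_pos hε0 α
    have h1ε : (0:ℝ) < 1 - ε := by linarith
    set C := (((1 - ε) * ε ^ α)⁻¹) ^ ((1:ℝ)/2) with hC_def
    have hC : 0 < C := Real.rpow_pos_of_pos (by positivity) _
    refine ⟨C + 1, by positivity, ?_⟩
    intro n hn q g hg hg2 hq hgn hint x hx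
    rcases le_total n 1 with hn1 | hn1
    · -- small n
      have h0 : (0:ℝ) ∈ Set.Icc (0:ℝ) 1 := by constructor <;> norm_num
      have hx01 : x ∈ Set.Icc (0:ℝ) 1 := ⟨hx.1, by linarith [hx.2]⟩
      have hq0 : q 0 = 0 := by rw [hq 0 h0]; simp
      have h1 := holder_step n hn q g hg hg2 hq hgn h0 hx01 hx.1
      rw [hq0, sub_zero] at h1
      have h2 : Real.sqrt (n * (x - 0)) ≤ Real.sqrt n := by
        apply Real.sqrt_le_sqrt; nlinarith [hx01.2, hx.1]
      have h3 : Real.sqrt n = n ^ ((1:ℝ)/2) := Real.sqrt_eq_rpow n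
      have h4 : n ^ ((1:ℝ)/2) ≤ n ^ ((1:ℝ)/4) :=
        Real.rpow_le_rpow_of_exponent_ge hn hn1 (by norm_num)
      have h5 : n ^ ((1:ℝ)/4) ≤ (C + 1) * n ^ ((1:ℝ)/4) := by
        have hne : (0:ℝ) < n ^ ((1:ℝ)/4) := Real.rpow_pos_of_pos hn _
        nlinarith
      linarith
    · -- large n
      set δ := (1 - ε) * n ^ (-(2:ℝ)⁻¹) with hδdef
      have hnt : 0 < n ^ (-(2:ℝ)⁻¹) := Real.rpow_pos_of_pos hn _
      have hnt1 : n ^ (-(2:ℝ)⁻¹) ≤ 1 :=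
        Real.rpow_le_one_of_one_le_of_nonpos hn1 (by norm_num)
      have hδpos : 0 < δ := by rw [hδdef]; positivity
      have hδle : δ ≤ 1 - ε := by rw [hδdef]; nlinarith
      have hδd : δ + ε ≤ 1 := by linarith
      have h1 := core_bound α hα n hn q g hg hg2 hq hgn hint hδpos hε0 hδd hx
      have e3 : 1 / (δ * ε ^ α) = ((1 - ε) * ε ^ α)⁻¹ * n ^ ((2:ℝ)⁻¹) := by
        rw [hδdef, one_div,
          show (1 - ε) * n ^ (-(2:ℝ)⁻¹) * ε ^ α = ((1 - ε) * ε ^ α) * n ^ (-(2:ℝ)⁻¹) by ring,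
          mul_inv, ← Real.rpow_neg hn.le, neg_neg]
      have hA : Real.sqrt (1 / (δ * ε ^ α)) = C * n ^ ((1:ℝ)/4) := by
        rw [e3, sqrt_mul_rpow _ _ _ hn (by positivity), hC_def,
          show ((2:ℝ)⁻¹ / 2) = (1:ℝ)/4 by norm_num]
      have hB : Real.sqrt (n * δ) ≤ n ^ ((1:ℝ)/4) := by
        have hν : n * δ = (1 - ε) * n ^ ((2:ℝ)⁻¹) := by
          rw [hδdef, show n * ((1 - ε) * n ^ (-(2:ℝ)⁻¹)) = (1 - ε) * (n ^ (1:ℝ) * n ^ (-(2:ℝ)⁻¹)) by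
            rw [Real.rpow_one]; ring, ← Real.rpow_add hn]
          norm_num
        rw [hν, sqrt_mul_rpow _ _ _ hn h1ε, show ((2:ℝ)⁻¹ / 2) = (1:ℝ)/4 by norm_num]
        have h6 : (1 - ε) ^ ((1:ℝ)/2) ≤ 1 :=
          Real.rpow_le_one h1ε.le (by linarith) (by norm_num)
        nlinarith [Real.rpow_pos_of_pos hn ((1:ℝ)/4)]
      rw [hA] at h1
      nlinarith [Real.rpow_pos_of_pos hn ((1:ℝ)/4)]
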